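/- arXiv:2509.21614 — 2 statements merged into one kernel-verified Lean document; each statement's English description precedes it below -/
import Mathlib

section
/- Balistic-regime one-step covariance for the second momentum: with g = ∇f(θ) + (σ/√τ) z, E[z]=0, Cov(z)=τΣ(θ), third moments of z bounded by K(θ)τ^{5/2}, and M(θ) the covariance of (z/√τ)^{⊙2}, the increment Δu = −τu + τ g^{⊙2} satisfies E[(Δu − E Δu)(Δu − E Δu)^T] = τ²(σ⁴ M(θ) + 4σ² diag(∇f(θ)) Σ(θ) diag(∇f(θ))) + O(τ^{5/2}·τ^{1/2}) = that expression up to terms of order τ³. -/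
open MeasureTheory Finset

private lemma prod_single_pow {d : ℕ} (x : Fin d → ℝ) (i : Fin d) (m : ℕ) :
    ∏ k, x k ^ (Pi.single i m : Fin d → ℕ) k = x i ^ m := by
  rw [Finset.prod_eq_single i (fun b _ hb => by rw [Pi.single_eq_of_ne hb, pow_zero])
    (fun h => absurd (Finset.mem_univ i) h), Pi.single_eq_same]

private lemma monomial_integrable {Ω : Type*} [MeasurableSpace Ω] {μ : Measure Ω} {d : ℕ}
    {w : Ω → Fin d → ℝ}
    (hint : ∀ p : Fin d → ℕ, (∑ i, p i) ≤ 4 → Integrable (fun ω => ∏ i, (w ω i) ^ p i) μ)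
    (m n : ℕ) (hmn : m + n ≤ 4) (i j : Fin d) :
    Integrable (fun ω => w ω i ^ m * w ω j ^ n) μ := by
  have hp : (∑ k, (Pi.single i m + Pi.single j n : Fin d → ℕ) k) ≤ 4 := by
    simpa [Finset.sum_add_distrib, Finset.sum_pi_single'] using hmn
  have h := hint _ hp
  have he : (fun ω => ∏ k, w ω k ^ (Pi.single i m + Pi.single j n : Fin d → ℕ) k)
      = fun ω => w ω i ^ m * w ω j ^ n := by
    funext ω
    rw [Finset.prod_congr rfl (fun k _ => by rw [Pi.add_apply, pow_add]),
      Finset.prod_mul_distrib, prod_single_pow, prod_single_pow]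
  rwa [he] at h

private lemma key_expand (σ τ a b x y ui uj Sii Sjj : ℝ) (hτ : 0 < τ) :
    ((-(τ * ui) + τ * (a + σ / Real.sqrt τ * x) ^ 2)
        - (-(τ * ui) + τ * a ^ 2 + σ ^ 2 * (τ * Sii))) *
      ((-(τ * uj) + τ * (b + σ / Real.sqrt τ * y) ^ 2)
        - (-(τ * uj) + τ * b ^ 2 + σ ^ 2 * (τ * Sjj)))
    = (4 * a * b * σ ^ 2 * τ) * (x * y)
      + (2 * a * σ ^ 3 * Real.sqrt τ) * (x * y ^ 2 - τ * Sjj * x)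
      + (2 * b * σ ^ 3 * Real.sqrt τ) * (x ^ 2 * y - τ * Sii * y)
      + σ ^ 4 * ((x ^ 2 - τ * Sii) * (y ^ 2 - τ * Sjj)) := by
  have h2 : Real.sqrt τ ^ 2 = τ := Real.sq_sqrt hτ.le
  have h0 : Real.sqrt τ ≠ 0 := by positivity
  generalize hg : Real.sqrt τ = s at h2 h0 ⊢
  rw [← h2]
  field_simp
  ring

/-- balistic-regime one-step covariance of the second-momentum increment
`Δu = −τu + τ g^{⊙2}`, `g = ∇f(θ) + (σ/√τ) z`: under the low-skewness condition
(third moments of `z` bounded by `Kc τ^{5/2}`),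
`Cov(Δu) = τ²(σ⁴ M(θ) + 4σ² diag(∇f) Σ diag(∇f)) + O(τ³)`. -/
theorem rmsprop_one_step_second_momentum_covariance
    {Ω : Type*} [MeasurableSpace Ω] (μ : Measure Ω) [IsProbabilityMeasure μ]
    (d : ℕ) (σ Kc : ℝ) (hσ : 0 < σ) (hKc : 0 ≤ Kc)
    (Df u : Fin d → ℝ) (S Mm : Fin d → Fin d → ℝ)
    (z : ℝ → Ω → Fin d → ℝ)
    (hint : ∀ τ ∈ Set.Ioo (0 : ℝ) 1, ∀ p : Fin d → ℕ, (∑ i, p i) ≤ 4 →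
      Integrable (fun ω => ∏ i, (z τ ω i) ^ p i) μ)
    (hz : ∀ τ ∈ Set.Ioo (0 : ℝ) 1, ∀ i, ∫ ω, z τ ω i ∂μ = 0)
    (hcov : ∀ τ ∈ Set.Ioo (0 : ℝ) 1, ∀ i j, ∫ ω, z τ ω i * z τ ω j ∂μ = τ * S i j)
    (h3 : ∀ τ ∈ Set.Ioo (0 : ℝ) 1, ∀ i j k,
      |∫ ω, z τ ω i * z τ ω j * z τ ω k ∂μ| ≤ Kc * τ ^ ((5 : ℝ) / 2))
    (hM : ∀ τ ∈ Set.Ioo (0 : ℝ) 1, ∀ i j,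
      ∫ ω, ((z τ ω i) ^ 2 / τ - S i i) * ((z τ ω j) ^ 2 / τ - S j j) ∂μ = Mm i j) :
    ∃ C : ℝ, 0 ≤ C ∧ ∀ τ ∈ Set.Ioo (0 : ℝ) 1, ∀ i j,
      |(∫ ω,
          ((-(τ * u i) + τ * (Df i + σ / Real.sqrt τ * z τ ω i) ^ 2)
            - ∫ ω', (-(τ * u i) + τ * (Df i + σ / Real.sqrt τ * z τ ω' i) ^ 2) ∂μ) *
          ((-(τ * u j) + τ * (Df j + σ / Real.sqrt τ * z τ ω j) ^ 2)
            - ∫ ω', (-(τ * u j) + τ * (Df j + σ / Real.sqrt τ * z τ ω' j) ^ 2) ∂μ) ∂μ)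
        - τ ^ 2 * (σ ^ 4 * Mm i j + 4 * σ ^ 2 * Df i * S i j * Df j)|
      ≤ C * τ ^ 3 := by
  set Sd : ℝ := ∑ k, |Df k| with hSd
  have hSd0 : 0 ≤ Sd := Finset.sum_nonneg fun k _ => abs_nonneg _
  refine ⟨4 * σ ^ 3 * Kc * Sd, by positivity, ?_⟩
  intro τ hτm i j
  obtain ⟨hτ0, hτ1⟩ := hτm
  have hτm' : τ ∈ Set.Ioo (0 : ℝ) 1 := ⟨hτ0, hτ1⟩
  have hsq : Real.sqrt τ ^ 2 = τ := Real.sq_sqrt hτ0.le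
  have hs0 : Real.sqrt τ ≠ 0 := by positivity
  have key := monomial_integrable (μ := μ) (w := z τ) (fun p hp => hint τ hτm' p hp)
  have I1 : ∀ k, Integrable (fun ω => z τ ω k) μ := fun k => by
    simpa using key 1 0 (by norm_num) k k
  have I2 : ∀ k, Integrable (fun ω => z τ ω k ^ 2) μ := fun k => by
    simpa using key 2 0 (by norm_num) k k
  have I11 : Integrable (fun ω => z τ ω i * z τ ω j) μ := by
    simpa using key 1 1 (by norm_num) i j
  have I12 : Integrable (fun ω => z τ ω i * z τ ω j ^ 2) μ := by
    simpa using key 1 2 (by norm_num) i j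
  have I21 : Integrable (fun ω => z τ ω i ^ 2 * z τ ω j) μ := by
    simpa using key 2 1 (by norm_num) i j
  have I22 : Integrable (fun ω => z τ ω i ^ 2 * z τ ω j ^ 2) μ := by
    simpa using key 2 2 (by norm_num) i j
  -- inner integral
  have hs1 : τ * (σ / Real.sqrt τ) = σ * Real.sqrt τ := by
    rw [mul_div_assoc', div_eq_iff hs0]
    linear_combination (-σ) * hsq
  have hs2 : τ * (σ / Real.sqrt τ) ^ 2 = σ ^ 2 := by
    rw [div_pow, hsq, mul_div_assoc', mul_comm, mul_div_assoc, div_self hτ0.ne', mul_one]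
  have hz2 : ∀ k, ∫ ω, z τ ω k ^ 2 ∂μ = τ * S k k := fun k => by
    simpa [pow_two] using hcov τ hτm' k k
  have hinner : ∀ k, (∫ ω', (-(τ * u k) + τ * (Df k + σ / Real.sqrt τ * z τ ω' k) ^ 2) ∂μ)
      = -(τ * u k) + τ * Df k ^ 2 + σ ^ 2 * (τ * S k k) := by
    intro k
    have hfe : (fun ω => -(τ * u k) + τ * (Df k + σ / Real.sqrt τ * z τ ω k) ^ 2)
        = fun ω => ((-(τ * u k) + τ * Df k ^ 2)
            + (2 * Df k * (σ * Real.sqrt τ)) * z τ ω k) + σ ^ 2 * z τ ω k ^ 2 := by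
      funext ω
      linear_combination (2 * Df k * z τ ω k) * hs1 + (z τ ω k) ^ 2 * hs2
    have ha : Integrable (fun ω => (-(τ * u k) + τ * Df k ^ 2)
        + (2 * Df k * (σ * Real.sqrt τ)) * z τ ω k) μ :=
      (integrable_const _).add ((I1 k).const_mul _)
    rw [hfe, integral_add ha ((I2 k).const_mul _),
      integral_add (integrable_const _) ((I1 k).const_mul _), integral_const,
      integral_const_mul, integral_const_mul, hz τ hτm' k, hz2 k]
    simp
  rw [hinner i, hinner j]
  -- expand the product and integrate term by term
  set Ta : ℝ := ∫ ω, z τ ω i * z τ ω j ^ 2 ∂μ with hTa_def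
  set Tb : ℝ := ∫ ω, z τ ω i ^ 2 * z τ ω j ∂μ with hTb_def
  have hstep : (∫ ω,
        ((-(τ * u i) + τ * (Df i + σ / Real.sqrt τ * z τ ω i) ^ 2)
          - (-(τ * u i) + τ * Df i ^ 2 + σ ^ 2 * (τ * S i i))) *
        ((-(τ * u j) + τ * (Df j + σ / Real.sqrt τ * z τ ω j) ^ 2)
          - (-(τ * u j) + τ * Df j ^ 2 + σ ^ 2 * (τ * S j j))) ∂μ)
      = ∫ ω, ((4 * Df i * Df j * σ ^ 2 * τ) * (z τ ω i * z τ ω j)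
          + (2 * Df i * σ ^ 3 * Real.sqrt τ) * (z τ ω i * z τ ω j ^ 2 - τ * S j j * z τ ω i)
          + (2 * Df j * σ ^ 3 * Real.sqrt τ) * (z τ ω i ^ 2 * z τ ω j - τ * S i i * z τ ω j)
          + σ ^ 4 * ((z τ ω i ^ 2 - τ * S i i) * (z τ ω j ^ 2 - τ * S j j))) ∂μ :=
    integral_congr_ae (Filter.Eventually.of_forall fun ω =>
      key_expand σ τ (Df i) (Df j) (z τ ω i) (z τ ω j) (u i) (u j) (S i i) (S j j) hτ0)
  have J1 : Integrable (fun ω => (4 * Df i * Df j * σ ^ 2 * τ) * (z τ ω i * z τ ω j)) μ :=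
    I11.const_mul _
  have J2 : Integrable (fun ω =>
      (2 * Df i * σ ^ 3 * Real.sqrt τ) * (z τ ω i * z τ ω j ^ 2 - τ * S j j * z τ ω i)) μ :=
    (I12.sub ((I1 i).const_mul _)).const_mul _
  have J3 : Integrable (fun ω =>
      (2 * Df j * σ ^ 3 * Real.sqrt τ) * (z τ ω i ^ 2 * z τ ω j - τ * S i i * z τ ω j)) μ :=
    (I21.sub ((I1 j).const_mul _)).const_mul _
  have J4' : Integrable (fun ω => (z τ ω i ^ 2 - τ * S i i) * (z τ ω j ^ 2 - τ * S j j)) μ := by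
    have hfe : (fun ω => (z τ ω i ^ 2 - τ * S i i) * (z τ ω j ^ 2 - τ * S j j))
        = fun ω => z τ ω i ^ 2 * z τ ω j ^ 2 - (τ * S j j) * z τ ω i ^ 2
            - (τ * S i i) * z τ ω j ^ 2 + (τ * S i i) * (τ * S j j) := by
      funext ω; ring
    rw [hfe]
    exact ((I22.sub ((I2 i).const_mul _)).sub ((I2 j).const_mul _)).add (integrable_const _)
  have J4 : Integrable (fun ω =>
      σ ^ 4 * ((z τ ω i ^ 2 - τ * S i i) * (z τ ω j ^ 2 - τ * S j j))) μ := J4'.const_mul _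
  have hv2 : ∫ ω, (z τ ω i * z τ ω j ^ 2 - τ * S j j * z τ ω i) ∂μ = Ta := by
    rw [integral_sub I12 ((I1 i).const_mul _), integral_const_mul, hz τ hτm' i]
    simp [hTa_def]
  have hv3 : ∫ ω, (z τ ω i ^ 2 * z τ ω j - τ * S i i * z τ ω j) ∂μ = Tb := by
    rw [integral_sub I21 ((I1 j).const_mul _), integral_const_mul, hz τ hτm' j]
    simp [hTb_def]
  have hv4 : ∫ ω, ((z τ ω i ^ 2 - τ * S i i) * (z τ ω j ^ 2 - τ * S j j)) ∂μ
      = τ ^ 2 * Mm i j := by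
    have hfe : (fun ω => (z τ ω i ^ 2 - τ * S i i) * (z τ ω j ^ 2 - τ * S j j))
        = fun ω => τ ^ 2 * ((z τ ω i ^ 2 / τ - S i i) * (z τ ω j ^ 2 / τ - S j j)) := by
      funext ω
      field_simp
    rw [hfe, integral_const_mul, hM τ hτm' i j]
  have h12 : Integrable (fun ω =>
      (4 * Df i * Df j * σ ^ 2 * τ) * (z τ ω i * z τ ω j)
      + (2 * Df i * σ ^ 3 * Real.sqrt τ) * (z τ ω i * z τ ω j ^ 2 - τ * S j j * z τ ω i)) μ :=
    J1.add J2
  have h123 : Integrable (fun ω =>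
      (4 * Df i * Df j * σ ^ 2 * τ) * (z τ ω i * z τ ω j)
      + (2 * Df i * σ ^ 3 * Real.sqrt τ) * (z τ ω i * z τ ω j ^ 2 - τ * S j j * z τ ω i)
      + (2 * Df j * σ ^ 3 * Real.sqrt τ) * (z τ ω i ^ 2 * z τ ω j - τ * S i i * z τ ω j)) μ :=
    h12.add J3
  rw [hstep, integral_add h123 J4, integral_add h12 J3, integral_add J1 J2,
    integral_const_mul, integral_const_mul, integral_const_mul, integral_const_mul,
    hcov τ hτm' i j, hv2, hv3, hv4]
  -- the remainder
  have hdiff : (4 * Df i * Df j * σ ^ 2 * τ) * (τ * S i j)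
        + (2 * Df i * σ ^ 3 * Real.sqrt τ) * Ta
        + (2 * Df j * σ ^ 3 * Real.sqrt τ) * Tb
        + σ ^ 4 * (τ ^ 2 * Mm i j)
        - τ ^ 2 * (σ ^ 4 * Mm i j + 4 * σ ^ 2 * Df i * S i j * Df j)
      = (2 * Df i * σ ^ 3 * Real.sqrt τ) * Ta + (2 * Df j * σ ^ 3 * Real.sqrt τ) * Tb := by
    ring
  rw [hdiff]
  have hrt : Real.sqrt τ * τ ^ ((5 : ℝ) / 2) = τ ^ 3 := by
    rw [Real.sqrt_eq_rpow, ← Real.rpow_natCast τ 3, ← Real.rpow_add hτ0]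
    norm_num
  have hTa : |Ta| ≤ Kc * τ ^ ((5 : ℝ) / 2) := by
    have h3' := h3 τ hτm' i j j
    have hfe : (fun ω => z τ ω i * z τ ω j * z τ ω j) = fun ω => z τ ω i * z τ ω j ^ 2 := by
      funext ω; ring
    rwa [hfe] at h3'
  have hTb : |Tb| ≤ Kc * τ ^ ((5 : ℝ) / 2) := by
    have h3' := h3 τ hτm' i i j
    have hfe : (fun ω => z τ ω i * z τ ω i * z τ ω j) = fun ω => z τ ω i ^ 2 * z τ ω j := by
      funext ω; ring
    rwa [hfe] at h3'
  have hbound : ∀ (c T : ℝ), |T| ≤ Kc * τ ^ ((5 : ℝ) / 2) → |c| ≤ Sd →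
      |(2 * c * σ ^ 3 * Real.sqrt τ) * T| ≤ 2 * Sd * σ ^ 3 * Kc * τ ^ 3 := by
    intro c T hT hc
    have h1 : |(2 * c * σ ^ 3 * Real.sqrt τ) * T| = 2 * |c| * σ ^ 3 * Real.sqrt τ * |T| := by
      rw [abs_mul, abs_mul, abs_mul, abs_mul, abs_of_nonneg (by positivity : (0:ℝ) ≤ σ ^ 3),
        abs_of_nonneg (Real.sqrt_nonneg τ)]
      norm_num
    calc |(2 * c * σ ^ 3 * Real.sqrt τ) * T| = 2 * |c| * σ ^ 3 * Real.sqrt τ * |T| := h1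
      _ ≤ 2 * Sd * σ ^ 3 * Real.sqrt τ * (Kc * τ ^ ((5 : ℝ) / 2)) := by gcongr
      _ = 2 * Sd * σ ^ 3 * Kc * (Real.sqrt τ * τ ^ ((5 : ℝ) / 2)) := by ring
      _ = 2 * Sd * σ ^ 3 * Kc * τ ^ 3 := by rw [hrt]
  have hci : |Df i| ≤ Sd :=
    Finset.single_le_sum (f := fun k => |Df k|) (fun k _ => abs_nonneg _) (Finset.mem_univ i)
  have hcj : |Df j| ≤ Sd :=
    Finset.single_le_sum (f := fun k => |Df k|) (fun k _ => abs_nonneg _) (Finset.mem_univ j)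
  calc |(2 * Df i * σ ^ 3 * Real.sqrt τ) * Ta + (2 * Df j * σ ^ 3 * Real.sqrt τ) * Tb|
      ≤ |(2 * Df i * σ ^ 3 * Real.sqrt τ) * Ta| + |(2 * Df j * σ ^ 3 * Real.sqrt τ) * Tb| :=
        abs_add_le _ _
    _ ≤ 2 * Sd * σ ^ 3 * Kc * τ ^ 3 + 2 * Sd * σ ^ 3 * Kc * τ ^ 3 :=
        add_le_add (hbound _ _ hTa hci) (hbound _ _ hTb hcj)
    _ = 4 * σ ^ 3 * Kc * Sd * τ ^ 3 := by ring
end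

section
/- Discrete-vs-continuous normalization matching: define γ̄(k) = 1 − (1−λτ)^k and γ(t) = 1 − exp(−t Σ_{j=1}^5 λ^j τ^{j-1}/j). Then for every T>0 there is C>0 independent of τ ∈ (0, 1/(2λ)) such that |γ̄(k) − γ(kτ)| ≤ C τ² for all k with kτ ≤ T. -/
open Finset

lemma exp_diff_le_aux (a b : ℝ) (ha : a ≤ 0) (hb : b ≤ 0) :
    |Real.exp a - Real.exp b| ≤ |a - b| * Real.exp |a - b| := by
  wlog h : b ≤ a generalizing a b
  · rw [abs_sub_comm, abs_sub_comm a b]; exact this b a hb ha (le_of_not_ge h)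
  have hab : 0 ≤ a - b := by linarith
  rw [abs_of_nonneg hab]
  have h1 : Real.exp a - Real.exp b = Real.exp b * (Real.exp (a - b) - 1) := by
    rw [mul_sub, ← Real.exp_add]; ring_nf
  have h2 : Real.exp (a - b) - 1 ≤ (a - b) * Real.exp (a - b) := by
    have := Real.add_one_le_exp (-(a - b))
    have hp := Real.exp_pos (a - b)
    have hm : Real.exp (-(a-b)) * Real.exp (a-b) = 1 := by
      rw [← Real.exp_add]; simp
    nlinarith
  have h3 : Real.exp b ≤ 1 := Real.exp_le_one_iff.mpr hb
  have h4 : 0 ≤ Real.exp (a - b) - 1 := by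
    have := Real.one_le_exp hab; linarith
  rw [abs_of_nonneg (by nlinarith [Real.exp_pos b] : (0:ℝ) ≤ Real.exp a - Real.exp b)]
  calc Real.exp a - Real.exp b = Real.exp b * (Real.exp (a - b) - 1) := h1
    _ ≤ 1 * (Real.exp (a - b) - 1) := by nlinarith [Real.exp_pos b]
    _ = Real.exp (a - b) - 1 := by ring
    _ ≤ (a - b) * Real.exp (a - b) := h2

/-- discrete-vs-continuous bias-correction matching in Adam:
`γ̄(k) = 1 − (1−λτ)^k` and `γ(t) = 1 − exp(−t Σ_{j=1}^5 λ^j τ^{j−1}/j)` differ by `O(τ²)`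
uniformly for `kτ ≤ T`. -/
theorem gamma_normalization_matching
    (lam T : ℝ) (hlam : 0 < lam) (hT : 0 < T) :
    ∃ C : ℝ, 0 ≤ C ∧ ∀ τ ∈ Set.Ioo (0 : ℝ) (1 / (2 * lam)), ∀ k : ℕ, (k : ℝ) * τ ≤ T →
      |(1 - (1 - lam * τ) ^ k) -
        (1 - Real.exp (-((k : ℝ) * τ *
          ∑ j ∈ Finset.range 5, lam ^ (j + 1) * τ ^ j / (j + 1))))| ≤ C * τ ^ 2 := by
  set D : ℝ := lam ^ 3 * T / 4 with hD
  have hD0 : 0 ≤ D := by positivity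
  refine ⟨D * Real.exp (D * (1 / (2 * lam)) ^ 2), by positivity, ?_⟩
  rintro τ ⟨hτ0, hτ1⟩ k hkT
  have h2l : (0:ℝ) < 2 * lam := by positivity
  have hx0 : 0 < lam * τ := by positivity
  have hx1 : lam * τ < 1 / 2 := by
    rw [lt_div_iff₀ h2l] at hτ1
    nlinarith
  have hk0 : (0:ℝ) ≤ (k : ℝ) := Nat.cast_nonneg k
  have h1x : (0:ℝ) < 1 - lam * τ := by linarith
  have hpow : (1 - lam * τ) ^ k = Real.exp ((k : ℝ) * Real.log (1 - lam * τ)) := by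
    rw [Real.exp_nat_mul, Real.exp_log h1x]
  have hsum : (k : ℝ) * τ * ∑ j ∈ Finset.range 5, lam ^ (j + 1) * τ ^ j / (j + 1)
      = (k : ℝ) * ∑ j ∈ Finset.range 5, (lam * τ) ^ (j + 1) / (j + 1) := by
    rw [Finset.mul_sum, Finset.mul_sum]
    refine Finset.sum_congr rfl fun j _ => ?_
    rw [mul_pow, pow_succ]
    ring
  have key : 1 - (1 - lam * τ) ^ k -
      (1 - Real.exp (-((k : ℝ) * τ * ∑ j ∈ Finset.range 5, lam ^ (j + 1) * τ ^ j / (j + 1))))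
      = Real.exp (-((k : ℝ) * ∑ j ∈ Finset.range 5, (lam * τ) ^ (j + 1) / (j + 1)))
        - Real.exp ((k : ℝ) * Real.log (1 - lam * τ)) := by
    rw [hpow, hsum]; ring
  rw [key]
  set b : ℝ := -((k : ℝ) * ∑ j ∈ Finset.range 5, (lam * τ) ^ (j + 1) / (j + 1)) with hb
  set a : ℝ := (k : ℝ) * Real.log (1 - lam * τ) with ha
  -- tail bound for log series
  have hlogtail : |(∑ j ∈ Finset.range 5, (lam * τ) ^ (j + 1) / (j + 1)) + Real.log (1 - lam * τ)|
      ≤ |lam * τ| ^ 6 / (1 - |lam * τ|) := by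
    have := Real.abs_log_sub_add_sum_range_le (x := lam * τ)
      (by rw [abs_of_pos hx0]; linarith) 5
    simpa using this
  rw [abs_of_pos hx0] at hlogtail
  have htail2 : |(∑ j ∈ Finset.range 5, (lam * τ) ^ (j + 1) / (j + 1)) + Real.log (1 - lam * τ)|
      ≤ 2 * (lam * τ) ^ 6 := by
    have hd : (lam * τ) ^ 6 / (1 - lam * τ) ≤ 2 * (lam * τ) ^ 6 := by
      rw [div_le_iff₀ h1x]
      nlinarith [pow_pos hx0 6]
    linarith
  have hab : |b - a| ≤ D * τ ^ 2 := by
    have heq : b - a = -((k : ℝ) * ((∑ j ∈ Finset.range 5, (lam * τ) ^ (j + 1) / (j + 1))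
        + Real.log (1 - lam * τ))) := by
      rw [ha, hb]; ring
    rw [heq, abs_neg, abs_mul, abs_of_nonneg hk0]
    have h1 : (k:ℝ) * |(∑ j ∈ Finset.range 5, (lam * τ) ^ (j + 1) / (j + 1)) + Real.log (1 - lam * τ)|
        ≤ (k:ℝ) * (2 * (lam * τ) ^ 6) := mul_le_mul_of_nonneg_left htail2 hk0
    have hkx : (k:ℝ) * (lam * τ) ≤ lam * T := by nlinarith
    have hx5 : (lam * τ) ^ 5 ≤ (lam * τ) ^ 2 / 8 := by
      have h3 : (lam * τ) ^ 3 ≤ (1/2:ℝ) ^ 3 := pow_le_pow_left₀ hx0.le hx1.le 3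
      have : (lam * τ) ^ 5 = (lam * τ) ^ 2 * (lam * τ) ^ 3 := by ring
      rw [this]
      have h2 : (0:ℝ) ≤ (lam * τ) ^ 2 := sq_nonneg _
      nlinarith
    have hmm : (k:ℝ) * (lam * τ) * (lam * τ) ^ 5 ≤ (lam * T) * ((lam * τ) ^ 2 / 8) :=
      mul_le_mul hkx hx5 (pow_nonneg hx0.le 5) (by positivity)
    have hid1 : (k:ℝ) * (2 * (lam * τ) ^ 6) = 2 * ((k:ℝ) * (lam * τ) * (lam * τ) ^ 5) := by ring
    have hid2 : 2 * ((lam * T) * ((lam * τ) ^ 2 / 8)) = D * τ ^ 2 := by rw [hD]; ring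
    linarith
  have ha0 : a ≤ 0 := by
    have hl : Real.log (1 - lam * τ) ≤ 0 := Real.log_nonpos (by linarith) (by linarith)
    exact mul_nonpos_of_nonneg_of_nonpos hk0 hl
  have hb0 : b ≤ 0 := by
    rw [hb, neg_nonpos]
    exact mul_nonneg hk0 (Finset.sum_nonneg fun j _ => by positivity)
  have hmain := exp_diff_le_aux b a hb0 ha0
  have habD : |b - a| ≤ D * (1 / (2 * lam)) ^ 2 := by
    have hτ2 : τ ^ 2 ≤ (1 / (2 * lam)) ^ 2 := pow_le_pow_left₀ hτ0.le hτ1.le 2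
    have := mul_le_mul_of_nonneg_left hτ2 hD0
    linarith
  calc |Real.exp b - Real.exp a| ≤ |b - a| * Real.exp |b - a| := hmain
    _ ≤ (D * τ ^ 2) * Real.exp (D * (1 / (2 * lam)) ^ 2) := by
        apply mul_le_mul hab (Real.exp_le_exp.mpr habD) (le_of_lt (Real.exp_pos _))
        positivity
    _ = D * Real.exp (D * (1 / (2 * lam)) ^ 2) * τ ^ 2 := by ring
end
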